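/- Let P₁ and P₂ be probability measures on ℝ^{d₁} and ℝ^{d₂} respectively, each satisfying condition C(φ) (in dimensions d₁ and d₂ respectively) for the same function φ : (0,∞) → (0,∞). Then the product measure P₁ ⊗ P₂, viewed as a probability measure on ℝ^{d₁+d₂} with the Euclidean norm, also satisfies condition C(φ). -/

import Mathlib

open MeasureTheory
open scoped RealInnerProductSpace ENNReal

/-- The Gaussian weight `exp(−‖y − x‖²/(2σ²))` defining the Gaussian posterior
`ρ_{P,σ,y}(dx) ∝ exp(−‖y − x‖²/(2σ²)) P(dx)`. -/
noncomputable def gaussWeight {D : ℕ} (σ : ℝ) (y x : EuclideanSpace ℝ (Fin D)) : ℝ :=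
  Real.exp (-‖y - x‖ ^ 2 / (2 * σ ^ 2))

/-- The directional variance `Var_{ρ_{P,σ,y}}(⟨u,·⟩) = ∫⟨u,x⟫² dρ − (∫⟨u,x⟫ dρ)²` of the
Gaussian posterior `ρ_{P,σ,y}`, written via normalized weighted integrals against `P`. -/
noncomputable def dirVar {D : ℕ} (P : Measure (EuclideanSpace ℝ (Fin D))) (σ : ℝ)
    (y u : EuclideanSpace ℝ (Fin D)) : ℝ :=
  (∫ x, gaussWeight σ y x * ⟪u, x⟫ ^ 2 ∂P) / (∫ x, gaussWeight σ y x ∂P) -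
    ((∫ x, gaussWeight σ y x * ⟪u, x⟫ ∂P) / (∫ x, gaussWeight σ y x ∂P)) ^ 2

/-- Condition `C(φ)`: for all `σ > 0`, all `y` and all unit vectors `u`,
`Var_{ρ_{P,σ,y}}(⟨u,·⟩) ≤ φ(σ)`. -/
def SatisfiesC {D : ℕ} (P : Measure (EuclideanSpace ℝ (Fin D))) (φ : ℝ → ℝ) : Prop :=
  ∀ σ > 0, ∀ y u : EuclideanSpace ℝ (Fin D), ‖u‖ = 1 → dirVar P σ y u ≤ φ σ

/-- Concatenation of a vector of `ℝ^{d₁}` and a vector of `ℝ^{d₂}` into a vector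
of `ℝ^{d₁+d₂}`. -/
noncomputable def appendVec {d₁ d₂ : ℕ} (x : EuclideanSpace ℝ (Fin d₁))
    (y : EuclideanSpace ℝ (Fin d₂)) : EuclideanSpace ℝ (Fin (d₁ + d₂)) :=
  (WithLp.equiv 2 (Fin (d₁ + d₂) → ℝ)).symm
    (Fin.append (WithLp.equiv 2 (Fin d₁ → ℝ) x) (WithLp.equiv 2 (Fin d₂ → ℝ) y))

section Helpers

variable {d₁ d₂ : ℕ}

/-- First `d₁` coordinates. -/
noncomputable def splitVec₁ (y : EuclideanSpace ℝ (Fin (d₁ + d₂))) : EuclideanSpace ℝ (Fin d₁) :=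
  (WithLp.equiv 2 (Fin d₁ → ℝ)).symm (fun i => y (Fin.castAdd d₂ i))

/-- Last `d₂` coordinates. -/
noncomputable def splitVec₂ (y : EuclideanSpace ℝ (Fin (d₁ + d₂))) : EuclideanSpace ℝ (Fin d₂) :=
  (WithLp.equiv 2 (Fin d₂ → ℝ)).symm (fun i => y (Fin.natAdd d₁ i))

lemma appendVec_castAdd (a : EuclideanSpace ℝ (Fin d₁)) (b : EuclideanSpace ℝ (Fin d₂))
    (i : Fin d₁) : appendVec a b (Fin.castAdd d₂ i) = a i := by
  simp [appendVec, Fin.append_left]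

lemma appendVec_natAdd (a : EuclideanSpace ℝ (Fin d₁)) (b : EuclideanSpace ℝ (Fin d₂))
    (i : Fin d₂) : appendVec a b (Fin.natAdd d₁ i) = b i := by
  simp [appendVec, Fin.append_right]

lemma appendVec_split (y : EuclideanSpace ℝ (Fin (d₁ + d₂))) :
    appendVec (splitVec₁ y) (splitVec₂ y) = y := by
  ext i
  induction i using Fin.addCases with
  | left i => rw [appendVec_castAdd]; rfl
  | right i => rw [appendVec_natAdd]; rfl

lemma inner_appendVec (a c : EuclideanSpace ℝ (Fin d₁)) (b d : EuclideanSpace ℝ (Fin d₂)) :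
    ⟪appendVec a b, appendVec c d⟫ = ⟪a, c⟫ + ⟪b, d⟫ := by
  simp only [PiLp.inner_apply, RCLike.inner_apply, starRingEnd_apply, star_trivial]
  rw [Fin.sum_univ_add]
  simp [appendVec_castAdd, appendVec_natAdd]

lemma appendVec_sub (a c : EuclideanSpace ℝ (Fin d₁)) (b d : EuclideanSpace ℝ (Fin d₂)) :
    appendVec a b - appendVec c d = appendVec (a - c) (b - d) := by
  ext i
  induction i using Fin.addCases with
  | left i =>
      rw [PiLp.sub_apply, appendVec_castAdd, appendVec_castAdd, appendVec_castAdd,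
        PiLp.sub_apply]
  | right i =>
      rw [PiLp.sub_apply, appendVec_natAdd, appendVec_natAdd, appendVec_natAdd,
        PiLp.sub_apply]

lemma norm_sq_appendVec (a : EuclideanSpace ℝ (Fin d₁)) (b : EuclideanSpace ℝ (Fin d₂)) :
    ‖appendVec a b‖ ^ 2 = ‖a‖ ^ 2 + ‖b‖ ^ 2 := by
  rw [← real_inner_self_eq_norm_sq, ← real_inner_self_eq_norm_sq,
    ← real_inner_self_eq_norm_sq, inner_appendVec]

lemma gaussWeight_appendVec (σ : ℝ) (y : EuclideanSpace ℝ (Fin (d₁ + d₂)))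
    (a : EuclideanSpace ℝ (Fin d₁)) (b : EuclideanSpace ℝ (Fin d₂)) :
    gaussWeight σ y (appendVec a b)
      = gaussWeight σ (splitVec₁ y) a * gaussWeight σ (splitVec₂ y) b := by
  unfold gaussWeight
  rw [← Real.exp_add]
  congr 1
  have h : y - appendVec a b = appendVec (splitVec₁ y - a) (splitVec₂ y - b) := by
    conv_lhs => rw [← appendVec_split y]
    rw [appendVec_sub]
  rw [h, norm_sq_appendVec]
  ring

lemma inner_appendVec_right (u : EuclideanSpace ℝ (Fin (d₁ + d₂)))
    (a : EuclideanSpace ℝ (Fin d₁)) (b : EuclideanSpace ℝ (Fin d₂)) :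
    ⟪u, appendVec a b⟫ = ⟪splitVec₁ u, a⟫ + ⟪splitVec₂ u, b⟫ := by
  conv_lhs => rw [← appendVec_split u]
  exact inner_appendVec _ _ _ _

lemma measurable_appendVec :
    Measurable (fun p : EuclideanSpace ℝ (Fin d₁) × EuclideanSpace ℝ (Fin d₂) =>
      appendVec p.1 p.2) := by
  have h1 : Measurable (fun q : (Fin d₁ → ℝ) × (Fin d₂ → ℝ) =>
      (Fin.append q.1 q.2 : Fin (d₁ + d₂) → ℝ)) := by
    apply measurable_pi_lambda
    intro i
    induction i using Fin.addCases with
    | left i => simpa [Fin.append_left, Function.comp_def] using (measurable_pi_apply i).comp measurable_fst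
    | right i => simpa [Fin.append_right, Function.comp_def] using (measurable_pi_apply i).comp measurable_snd
  have h2 : Measurable (fun p : EuclideanSpace ℝ (Fin d₁) × EuclideanSpace ℝ (Fin d₂) =>
      ((MeasurableEquiv.toLp 2 (Fin d₁ → ℝ)).symm p.1,
        (MeasurableEquiv.toLp 2 (Fin d₂ → ℝ)).symm p.2)) :=
    ((MeasurableEquiv.toLp 2 _).symm.measurable.comp measurable_fst).prodMk
      ((MeasurableEquiv.toLp 2 _).symm.measurable.comp measurable_snd)
  have h3 : Measurable (fun q : (Fin d₁ → ℝ) × (Fin d₂ → ℝ) =>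
      (MeasurableEquiv.toLp 2 (Fin (d₁ + d₂) → ℝ)).symm.symm (Fin.append q.1 q.2)) :=
    (MeasurableEquiv.toLp 2 _).symm.symm.measurable.comp h1
  exact h3.comp h2

end Helpers

section Bounds

variable {D : ℕ}

lemma gauss_aux {c : ℝ} (hc : 0 < c) (r : ℝ) :
    Real.exp (-r ^ 2 / (2 * c)) * r ^ 2 ≤ 2 * c := by
  set s := r ^ 2 / (2 * c) with hs
  have hr2 : r ^ 2 = 2 * c * s := by rw [hs]; field_simp
  have h1 : s ≤ Real.exp s := by linarith [Real.add_one_le_exp s]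
  have h2 : Real.exp (-r ^ 2 / (2 * c)) = (Real.exp s)⁻¹ := by
    rw [← Real.exp_neg, neg_div]
  have hepos : 0 < Real.exp s := Real.exp_pos s
  have h3 : (Real.exp s)⁻¹ * s ≤ 1 := by
    rw [inv_mul_le_iff₀ hepos]; simpa using h1
  rw [h2, hr2]
  calc (Real.exp s)⁻¹ * (2 * c * s) = 2 * c * ((Real.exp s)⁻¹ * s) := by ring
  _ ≤ 2 * c * 1 := by
      exact mul_le_mul_of_nonneg_left h3 (by linarith)
  _ = 2 * c := by ring

lemma gaussWeight_nonneg (σ : ℝ) (y x : EuclideanSpace ℝ (Fin D)) :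
    0 ≤ gaussWeight σ y x := (Real.exp_pos _).le

lemma gaussWeight_le_one {σ : ℝ} (hσ : σ ≠ 0) (y x : EuclideanSpace ℝ (Fin D)) :
    gaussWeight σ y x ≤ 1 := by
  rw [gaussWeight, Real.exp_le_one_iff]
  have : 0 < 2 * σ ^ 2 := by positivity
  apply div_nonpos_of_nonpos_of_nonneg
  · simp [sq_nonneg]
  · exact this.le

lemma gaussWeight_mul_sq_le {σ : ℝ} (hσ : σ ≠ 0) (y u x : EuclideanSpace ℝ (Fin D)) :
    gaussWeight σ y x * ⟪u, x⟫ ^ 2 ≤ 2 * ‖u‖ ^ 2 * ‖y‖ ^ 2 + 4 * σ ^ 2 * ‖u‖ ^ 2 := by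
  have hw0 : 0 ≤ gaussWeight σ y x := gaussWeight_nonneg σ y x
  have hw1 : gaussWeight σ y x ≤ 1 := gaussWeight_le_one hσ y x
  have hx : ‖x‖ ≤ ‖y‖ + ‖y - x‖ := by
    have := norm_sub_norm_le y x
    have h2 := abs_norm_sub_norm_le y x
    have : ‖x‖ - ‖y‖ ≤ ‖y - x‖ := by
      have := abs_norm_sub_norm_le x y
      calc ‖x‖ - ‖y‖ ≤ |‖x‖ - ‖y‖| := le_abs_self _
      _ ≤ ‖x - y‖ := abs_norm_sub_norm_le x y
      _ = ‖y - x‖ := norm_sub_rev x y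
    linarith
  have hinner : ⟪u, x⟫ ^ 2 ≤ ‖u‖ ^ 2 * ‖x‖ ^ 2 := by
    have := abs_real_inner_le_norm u x
    nlinarith [abs_nonneg ⟪u, x⟫, le_abs_self ⟪u, x⟫, neg_abs_le ⟪u, x⟫]
  have hsq : ‖x‖ ^ 2 ≤ 2 * ‖y‖ ^ 2 + 2 * ‖y - x‖ ^ 2 := by
    nlinarith [hx, norm_nonneg x, norm_nonneg y, norm_nonneg (y - x),
      sq_nonneg (‖y‖ - ‖y - x‖)]
  have hgauss : gaussWeight σ y x * ‖y - x‖ ^ 2 ≤ 2 * σ ^ 2 := by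
    have hc : (0 : ℝ) < σ ^ 2 := by positivity
    exact gauss_aux hc ‖y - x‖
  calc gaussWeight σ y x * ⟪u, x⟫ ^ 2
      ≤ gaussWeight σ y x * (‖u‖ ^ 2 * (2 * ‖y‖ ^ 2 + 2 * ‖y - x‖ ^ 2)) := by
        apply mul_le_mul_of_nonneg_left _ hw0
        calc ⟪u, x⟫ ^ 2 ≤ ‖u‖ ^ 2 * ‖x‖ ^ 2 := hinner
        _ ≤ ‖u‖ ^ 2 * (2 * ‖y‖ ^ 2 + 2 * ‖y - x‖ ^ 2) :=
            mul_le_mul_of_nonneg_left hsq (by positivity)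
  _ = 2 * ‖u‖ ^ 2 * ‖y‖ ^ 2 * gaussWeight σ y x
        + 2 * ‖u‖ ^ 2 * (gaussWeight σ y x * ‖y - x‖ ^ 2) := by ring
  _ ≤ 2 * ‖u‖ ^ 2 * ‖y‖ ^ 2 * 1 + 2 * ‖u‖ ^ 2 * (2 * σ ^ 2) := by
      gcongr
  _ = 2 * ‖u‖ ^ 2 * ‖y‖ ^ 2 + 4 * σ ^ 2 * ‖u‖ ^ 2 := by ring

lemma continuous_gaussWeight (σ : ℝ) (y : EuclideanSpace ℝ (Fin D)) :
    Continuous fun x => gaussWeight σ y x := by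
  unfold gaussWeight
  fun_prop

lemma continuous_gaussWeight_inner (σ : ℝ) (y u : EuclideanSpace ℝ (Fin D)) (k : ℕ) :
    Continuous fun x => gaussWeight σ y x * ⟪u, x⟫ ^ k := by
  exact (continuous_gaussWeight σ y).mul
    ((continuous_const.inner continuous_id).pow k)

lemma integrable_gaussWeight_inner (P : Measure (EuclideanSpace ℝ (Fin D)))
    [IsFiniteMeasure P] {σ : ℝ} (hσ : σ ≠ 0) (y u : EuclideanSpace ℝ (Fin D))
    {k : ℕ} (hk : k ≤ 2) :
    Integrable (fun x => gaussWeight σ y x * ⟪u, x⟫ ^ k) P := by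
  set C : ℝ := 2 * ‖u‖ ^ 2 * ‖y‖ ^ 2 + 4 * σ ^ 2 * ‖u‖ ^ 2 with hC
  refine Integrable.mono' (integrable_const (1 + C))
    (continuous_gaussWeight_inner σ y u k).aestronglyMeasurable (ae_of_all _ fun x => ?_)
  have hw0 : 0 ≤ gaussWeight σ y x := gaussWeight_nonneg σ y x
  have hw1 : gaussWeight σ y x ≤ 1 := gaussWeight_le_one hσ y x
  have hsq : gaussWeight σ y x * ⟪u, x⟫ ^ 2 ≤ C := gaussWeight_mul_sq_le hσ y u x
  have habs : |⟪u, x⟫| ^ k ≤ 1 + ⟪u, x⟫ ^ 2 := by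
    interval_cases k
    · simp [sq_nonneg]
    · rw [pow_one]
      nlinarith [sq_nonneg (|⟪u, x⟫| - 1), abs_nonneg ⟪u, x⟫, sq_abs ⟪u, x⟫]
    · nlinarith [sq_abs ⟪u, x⟫, sq_nonneg ⟪u, x⟫]
  have : ‖gaussWeight σ y x * ⟪u, x⟫ ^ k‖ = gaussWeight σ y x * |⟪u, x⟫| ^ k := by
    rw [Real.norm_eq_abs, abs_mul, abs_of_nonneg hw0, abs_pow]
  rw [this]
  calc gaussWeight σ y x * |⟪u, x⟫| ^ k
      ≤ gaussWeight σ y x * (1 + ⟪u, x⟫ ^ 2) := mul_le_mul_of_nonneg_left habs hw0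
  _ = gaussWeight σ y x + gaussWeight σ y x * ⟪u, x⟫ ^ 2 := by ring
  _ ≤ 1 + C := add_le_add hw1 hsq

lemma integrable_gaussWeight (P : Measure (EuclideanSpace ℝ (Fin D)))
    [IsFiniteMeasure P] {σ : ℝ} (hσ : σ ≠ 0) (y : EuclideanSpace ℝ (Fin D)) :
    Integrable (fun x => gaussWeight σ y x) P := by
  have := integrable_gaussWeight_inner P hσ y 0 (k := 0) (by norm_num)
  simpa using this

lemma integral_gaussWeight_pos (P : Measure (EuclideanSpace ℝ (Fin D)))
    [IsProbabilityMeasure P] {σ : ℝ} (hσ : σ ≠ 0) (y : EuclideanSpace ℝ (Fin D)) :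
    0 < ∫ x, gaussWeight σ y x ∂P := by
  rw [integral_pos_iff_support_of_nonneg_ae (ae_of_all _ fun x => gaussWeight_nonneg σ y x)
    (integrable_gaussWeight P hσ y)]
  have : Function.support (fun x => gaussWeight σ y x) = Set.univ := by
    ext x; simp [gaussWeight, Real.exp_ne_zero]
  rw [this]
  simp

end Bounds

section Scaling

variable {D : ℕ}

lemma dirVar_smul (P : Measure (EuclideanSpace ℝ (Fin D))) (σ : ℝ)
    (y u : EuclideanSpace ℝ (Fin D)) (c : ℝ) :
    dirVar P σ y (c • u) = c ^ 2 * dirVar P σ y u := by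
  unfold dirVar
  have e2 : (fun x => gaussWeight σ y x * ⟪c • u, x⟫ ^ 2)
      = fun x => c ^ 2 * (gaussWeight σ y x * ⟪u, x⟫ ^ 2) := by
    funext x; rw [real_inner_smul_left]; ring
  have e1 : (fun x => gaussWeight σ y x * ⟪c • u, x⟫)
      = fun x => c * (gaussWeight σ y x * ⟪u, x⟫) := by
    funext x; rw [real_inner_smul_left]; ring
  rw [e2, e1, integral_const_mul, integral_const_mul]
  ring

lemma dirVar_le_of_satisfiesC {P : Measure (EuclideanSpace ℝ (Fin D))}
    {φ : ℝ → ℝ} (h : SatisfiesC P φ) {σ : ℝ} (hσ : 0 < σ)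
    (y u : EuclideanSpace ℝ (Fin D)) :
    dirVar P σ y u ≤ ‖u‖ ^ 2 * φ σ := by
  by_cases hu : u = 0
  · subst hu
    simp [dirVar, inner_zero_left]
  · have hn : ‖u‖ ≠ 0 := norm_ne_zero_iff.mpr hu
    have hv : ‖(‖u‖⁻¹ • u)‖ = 1 := by
      rw [norm_smul, norm_inv, norm_norm, inv_mul_cancel₀ hn]
    have key : dirVar P σ y u = ‖u‖ ^ 2 * dirVar P σ y (‖u‖⁻¹ • u) := by
      rw [← dirVar_smul]
      congr 1
      rw [smul_smul, mul_inv_cancel₀ hn, one_smul]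
    rw [key]
    exact mul_le_mul_of_nonneg_left (h σ hσ y _ hv) (by positivity)

end Scaling

/-- If `P₁` on `ℝ^{d₁}` and `P₂` on `ℝ^{d₂}` both satisfy condition `C(φ)`, then the product
measure `P₁ ⊗ P₂`, viewed as a measure on the Euclidean space `ℝ^{d₁+d₂}` via concatenation,
also satisfies `C(φ)`. -/
theorem satisfiesC_prod {d₁ d₂ : ℕ}
    (P₁ : Measure (EuclideanSpace ℝ (Fin d₁))) [IsProbabilityMeasure P₁]
    (P₂ : Measure (EuclideanSpace ℝ (Fin d₂))) [IsProbabilityMeasure P₂]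
    (φ : ℝ → ℝ) (h₁ : SatisfiesC P₁ φ) (h₂ : SatisfiesC P₂ φ) :
    SatisfiesC ((P₁.prod P₂).map (fun p => appendVec p.1 p.2)) φ := by
  intro σ hσ y u hu
  have hσ' : σ ≠ 0 := ne_of_gt hσ
  set y₁ := splitVec₁ y with hy₁
  set y₂ := splitVec₂ y with hy₂
  set u₁ := splitVec₁ u with hu₁
  set u₂ := splitVec₂ u with hu₂
  -- abbreviations
  set Z₁ : ℝ := ∫ x, gaussWeight σ y₁ x ∂P₁ with hZ₁
  set Z₂ : ℝ := ∫ x, gaussWeight σ y₂ x ∂P₂ with hZ₂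
  set A₁ : ℝ := ∫ x, gaussWeight σ y₁ x * ⟪u₁, x⟫ ∂P₁ with hA₁
  set A₂ : ℝ := ∫ x, gaussWeight σ y₂ x * ⟪u₂, x⟫ ∂P₂ with hA₂
  set B₁ : ℝ := ∫ x, gaussWeight σ y₁ x * ⟪u₁, x⟫ ^ 2 ∂P₁ with hB₁
  set B₂ : ℝ := ∫ x, gaussWeight σ y₂ x * ⟪u₂, x⟫ ^ 2 ∂P₂ with hB₂
  have hZ₁pos : 0 < Z₁ := integral_gaussWeight_pos P₁ hσ' y₁
  have hZ₂pos : 0 < Z₂ := integral_gaussWeight_pos P₂ hσ' y₂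
  -- integrability facts
  have I₁0 : Integrable (fun x => gaussWeight σ y₁ x) P₁ := integrable_gaussWeight P₁ hσ' y₁
  have I₂0 : Integrable (fun x => gaussWeight σ y₂ x) P₂ := integrable_gaussWeight P₂ hσ' y₂
  have I₁1 : Integrable (fun x => gaussWeight σ y₁ x * ⟪u₁, x⟫) P₁ := by
    have := integrable_gaussWeight_inner P₁ hσ' y₁ u₁ (k := 1) (by norm_num); simpa using this
  have I₂1 : Integrable (fun x => gaussWeight σ y₂ x * ⟪u₂, x⟫) P₂ := by
    have := integrable_gaussWeight_inner P₂ hσ' y₂ u₂ (k := 1) (by norm_num); simpa using this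
  have I₁2 : Integrable (fun x => gaussWeight σ y₁ x * ⟪u₁, x⟫ ^ 2) P₁ :=
    integrable_gaussWeight_inner P₁ hσ' y₁ u₁ (le_refl 2)
  have I₂2 : Integrable (fun x => gaussWeight σ y₂ x * ⟪u₂, x⟫ ^ 2) P₂ :=
    integrable_gaussWeight_inner P₂ hσ' y₂ u₂ (le_refl 2)
  -- rewrite the integrals over the mapped measure
  have hmap : ∀ k : ℕ,
      (∫ x, gaussWeight σ y x * ⟪u, x⟫ ^ k ∂((P₁.prod P₂).map (fun p => appendVec p.1 p.2)))
        = ∫ p, (gaussWeight σ y₁ p.1 * gaussWeight σ y₂ p.2)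
            * (⟪u₁, p.1⟫ + ⟪u₂, p.2⟫) ^ k ∂(P₁.prod P₂) := by
    intro k
    rw [integral_map measurable_appendVec.aemeasurable
      (continuous_gaussWeight_inner σ y u k).aestronglyMeasurable]
    congr 1
    funext p
    rw [gaussWeight_appendVec, inner_appendVec_right]
  -- Z
  have hZ : (∫ x, gaussWeight σ y x ∂((P₁.prod P₂).map (fun p => appendVec p.1 p.2)))
      = Z₁ * Z₂ := by
    have h0 := hmap 0
    simp only [pow_zero, mul_one] at h0
    rw [h0, hZ₁, hZ₂]
    exact integral_prod_mul (fun x => gaussWeight σ y₁ x) (fun x => gaussWeight σ y₂ x)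
  -- first moment
  have hA : (∫ x, gaussWeight σ y x * ⟪u, x⟫ ∂((P₁.prod P₂).map (fun p => appendVec p.1 p.2)))
      = A₁ * Z₂ + Z₁ * A₂ := by
    have h1 := hmap 1
    simp only [pow_one] at h1
    rw [h1]
    have e : (fun p : EuclideanSpace ℝ (Fin d₁) × EuclideanSpace ℝ (Fin d₂) =>
        (gaussWeight σ y₁ p.1 * gaussWeight σ y₂ p.2) * (⟪u₁, p.1⟫ + ⟪u₂, p.2⟫))
        = fun p => gaussWeight σ y₁ p.1 * ⟪u₁, p.1⟫ * gaussWeight σ y₂ p.2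
            + gaussWeight σ y₁ p.1 * (gaussWeight σ y₂ p.2 * ⟪u₂, p.2⟫) := by
      funext p; ring
    have J1 : Integrable (fun p : EuclideanSpace ℝ (Fin d₁) × EuclideanSpace ℝ (Fin d₂) =>
        gaussWeight σ y₁ p.1 * ⟪u₁, p.1⟫ * gaussWeight σ y₂ p.2) (P₁.prod P₂) :=
      I₁1.mul_prod I₂0
    have J2 : Integrable (fun p : EuclideanSpace ℝ (Fin d₁) × EuclideanSpace ℝ (Fin d₂) =>
        gaussWeight σ y₁ p.1 * (gaussWeight σ y₂ p.2 * ⟪u₂, p.2⟫)) (P₁.prod P₂) :=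
      I₁0.mul_prod I₂1
    have q1 : ∫ p : EuclideanSpace ℝ (Fin d₁) × EuclideanSpace ℝ (Fin d₂),
        gaussWeight σ y₁ p.1 * ⟪u₁, p.1⟫ * gaussWeight σ y₂ p.2 ∂(P₁.prod P₂) = A₁ * Z₂ := by
      simpa using integral_prod_mul (μ := P₁) (ν := P₂)
        (fun x => gaussWeight σ y₁ x * ⟪u₁, x⟫) (fun x => gaussWeight σ y₂ x)
    have q2 : ∫ p : EuclideanSpace ℝ (Fin d₁) × EuclideanSpace ℝ (Fin d₂),
        gaussWeight σ y₁ p.1 * (gaussWeight σ y₂ p.2 * ⟪u₂, p.2⟫) ∂(P₁.prod P₂) = Z₁ * A₂ := by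
      simpa using integral_prod_mul (μ := P₁) (ν := P₂)
        (fun x => gaussWeight σ y₁ x) (fun x => gaussWeight σ y₂ x * ⟪u₂, x⟫)
    rw [e, integral_add J1 J2, q1, q2]
  -- second moment
  have hB : (∫ x, gaussWeight σ y x * ⟪u, x⟫ ^ 2
        ∂((P₁.prod P₂).map (fun p => appendVec p.1 p.2)))
      = B₁ * Z₂ + 2 * (A₁ * A₂) + Z₁ * B₂ := by
    have h2 := hmap 2
    rw [h2]
    have e : (fun p : EuclideanSpace ℝ (Fin d₁) × EuclideanSpace ℝ (Fin d₂) =>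
        (gaussWeight σ y₁ p.1 * gaussWeight σ y₂ p.2) * (⟪u₁, p.1⟫ + ⟪u₂, p.2⟫) ^ 2)
        = fun p => (gaussWeight σ y₁ p.1 * ⟪u₁, p.1⟫ ^ 2 * gaussWeight σ y₂ p.2
            + 2 * (gaussWeight σ y₁ p.1 * ⟪u₁, p.1⟫) * (gaussWeight σ y₂ p.2 * ⟪u₂, p.2⟫))
            + gaussWeight σ y₁ p.1 * (gaussWeight σ y₂ p.2 * ⟪u₂, p.2⟫ ^ 2) := by
      funext p; ring
    have K1 : Integrable (fun p : EuclideanSpace ℝ (Fin d₁) × EuclideanSpace ℝ (Fin d₂) =>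
        gaussWeight σ y₁ p.1 * ⟪u₁, p.1⟫ ^ 2 * gaussWeight σ y₂ p.2) (P₁.prod P₂) :=
      I₁2.mul_prod I₂0
    have K2 : Integrable (fun p : EuclideanSpace ℝ (Fin d₁) × EuclideanSpace ℝ (Fin d₂) =>
        2 * (gaussWeight σ y₁ p.1 * ⟪u₁, p.1⟫) * (gaussWeight σ y₂ p.2 * ⟪u₂, p.2⟫))
        (P₁.prod P₂) := (I₁1.const_mul 2).mul_prod I₂1
    have K3 : Integrable (fun p : EuclideanSpace ℝ (Fin d₁) × EuclideanSpace ℝ (Fin d₂) =>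
        gaussWeight σ y₁ p.1 * (gaussWeight σ y₂ p.2 * ⟪u₂, p.2⟫ ^ 2)) (P₁.prod P₂) :=
      I₁0.mul_prod I₂2
    have K12 : Integrable (fun p : EuclideanSpace ℝ (Fin d₁) × EuclideanSpace ℝ (Fin d₂) =>
        gaussWeight σ y₁ p.1 * ⟪u₁, p.1⟫ ^ 2 * gaussWeight σ y₂ p.2
          + 2 * (gaussWeight σ y₁ p.1 * ⟪u₁, p.1⟫) * (gaussWeight σ y₂ p.2 * ⟪u₂, p.2⟫))
        (P₁.prod P₂) := K1.add K2
    have q1 : ∫ p : EuclideanSpace ℝ (Fin d₁) × EuclideanSpace ℝ (Fin d₂),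
        gaussWeight σ y₁ p.1 * ⟪u₁, p.1⟫ ^ 2 * gaussWeight σ y₂ p.2 ∂(P₁.prod P₂)
          = B₁ * Z₂ := by
      simpa using integral_prod_mul (μ := P₁) (ν := P₂)
        (fun x => gaussWeight σ y₁ x * ⟪u₁, x⟫ ^ 2) (fun x => gaussWeight σ y₂ x)
    have q2 : ∫ p : EuclideanSpace ℝ (Fin d₁) × EuclideanSpace ℝ (Fin d₂),
        2 * (gaussWeight σ y₁ p.1 * ⟪u₁, p.1⟫) * (gaussWeight σ y₂ p.2 * ⟪u₂, p.2⟫)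
          ∂(P₁.prod P₂) = 2 * (A₁ * A₂) := by
      have := integral_prod_mul (μ := P₁) (ν := P₂)
        (fun x => 2 * (gaussWeight σ y₁ x * ⟪u₁, x⟫)) (fun x => gaussWeight σ y₂ x * ⟪u₂, x⟫)
      simp only [integral_const_mul] at this
      calc ∫ p : EuclideanSpace ℝ (Fin d₁) × EuclideanSpace ℝ (Fin d₂),
          2 * (gaussWeight σ y₁ p.1 * ⟪u₁, p.1⟫) * (gaussWeight σ y₂ p.2 * ⟪u₂, p.2⟫)
            ∂(P₁.prod P₂) = 2 * A₁ * A₂ := this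
      _ = 2 * (A₁ * A₂) := by ring
    have q3 : ∫ p : EuclideanSpace ℝ (Fin d₁) × EuclideanSpace ℝ (Fin d₂),
        gaussWeight σ y₁ p.1 * (gaussWeight σ y₂ p.2 * ⟪u₂, p.2⟫ ^ 2) ∂(P₁.prod P₂)
          = Z₁ * B₂ := by
      simpa using integral_prod_mul (μ := P₁) (ν := P₂)
        (fun x => gaussWeight σ y₁ x) (fun x => gaussWeight σ y₂ x * ⟪u₂, x⟫ ^ 2)
    rw [e, integral_add K12 K3, integral_add K1 K2, q1, q2, q3]
  -- variance splits
  have hsplit : dirVar ((P₁.prod P₂).map (fun p => appendVec p.1 p.2)) σ y u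
      = dirVar P₁ σ y₁ u₁ + dirVar P₂ σ y₂ u₂ := by
    unfold dirVar
    rw [hZ, hA, hB, ← hZ₁, ← hZ₂, ← hA₁, ← hA₂, ← hB₁, ← hB₂]
    field_simp
    ring
  rw [hsplit]
  have hnorm : ‖u₁‖ ^ 2 + ‖u₂‖ ^ 2 = 1 := by
    rw [← norm_sq_appendVec, appendVec_split, hu]; norm_num
  calc dirVar P₁ σ y₁ u₁ + dirVar P₂ σ y₂ u₂
      ≤ ‖u₁‖ ^ 2 * φ σ + ‖u₂‖ ^ 2 * φ σ :=
        add_le_add (dirVar_le_of_satisfiesC h₁ hσ y₁ u₁) (dirVar_le_of_satisfiesC h₂ hσ y₂ u₂)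
  _ = (‖u₁‖ ^ 2 + ‖u₂‖ ^ 2) * φ σ := by ring
  _ = φ σ := by rw [hnorm, one_mul]
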